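/- For integers a ≥ b ≥ c ≥ 0 with a odd and b, c even (so the 2-core of (a,b,c) is (1)): s_{(a,b,c)}(x, -x, y) = y · s_{((a-1)/2, b/2)}(x², y²) · s_{(c/2)}(x²). -/
import Mathlib


/-- Schur polynomial in 3 variables via the bialternant formula
`det(v_i^{μ_j + 3 - j}) / det(v_i^{3 - j})` (1-indexed `j`). -/
noncomputable def schur3 {F : Type*} [Field F] (μ : Fin 3 → ℕ) (v : Fin 3 → F) : F :=
  Matrix.det (Matrix.of fun i j : Fin 3 => v i ^ (μ j + (2 - (j : ℕ)))) /
    Matrix.det (Matrix.of fun i j : Fin 3 => v i ^ (2 - (j : ℕ)))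

/-- Schur polynomial in 2 variables via the bialternant formula. -/
noncomputable def schur2 {F : Type*} [Field F] (μ : Fin 2 → ℕ) (v : Fin 2 → F) : F :=
  Matrix.det (Matrix.of fun i j : Fin 2 => v i ^ (μ j + (1 - (j : ℕ)))) /
    Matrix.det (Matrix.of fun i j : Fin 2 => v i ^ (1 - (j : ℕ)))

/-- for `a ≥ b ≥ c ≥ 0` with `a` odd and `b, c` even (2-core `(1)`),
`s_{(a,b,c)}(x,-x,y) = y · s_{((a-1)/2, b/2)}(x²,y²) · s_{(c/2)}(x²)`. -/
theorem schur_spec_odd_even_even {F : Type*} [Field F] (x y : F) (h2 : (2 : F) ≠ 0)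
    (hx : x ≠ 0) (hxy : x ≠ y) (hxy' : x ≠ -y)
    (a b c : ℕ) (hab : b ≤ a) (hbc : c ≤ b)
    (ha : Odd a) (hb : Even b) (hc : Even c) :
    schur3 ![a, b, c] ![x, -x, y] =
      y * schur2 ![(a - 1) / 2, b / 2] ![x ^ 2, y ^ 2] * (x ^ 2) ^ (c / 2) := by
  obtain ⟨A, rfl⟩ := ha
  obtain ⟨B, rfl⟩ := hb
  obtain ⟨C, rfl⟩ := hc
  have hd1 : (2 * A + 1 - 1) / 2 = A := by omega
  have hd2 : (B + B) / 2 = B := by omega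
  have hd3 : (C + C) / 2 = C := by omega
  have e1 : (-x) ^ (2 * A + 1 + 2) = -(x ^ (2 * A + 1 + 2)) :=
    Odd.neg_pow ⟨A + 1, by ring⟩ x
  have e2 : (-x) ^ (B + B + 1) = -(x ^ (B + B + 1)) :=
    Odd.neg_pow ⟨B, by ring⟩ x
  have e3 : (-x) ^ (C + C + 0) = x ^ (C + C + 0) :=
    Even.neg_pow ⟨C, by ring⟩ x
  have hxy2 : x - y ≠ 0 := sub_ne_zero.mpr hxy
  have hxy3 : x + y ≠ 0 := by
    intro h; exact hxy' (by linear_combination h)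
  have hA2 : x ^ 2 - y ^ 2 ≠ 0 := by
    have h := mul_ne_zero hxy2 hxy3
    intro h0; exact h (by linear_combination h0)
  have hD : x * y ^ 2 * 2 - x ^ 3 * 2 ≠ 0 := by
    have h := mul_ne_zero (mul_ne_zero (mul_ne_zero h2 hx) hxy2) hxy3
    intro h0; exact h (by linear_combination -h0)
  have hDval : Matrix.det (Matrix.of fun i j : Fin 3 =>
      (![x, -x, y] : Fin 3 → F) i ^ (2 - (j : ℕ))) = x * y ^ 2 * 2 - x ^ 3 * 2 := by
    simp [Matrix.det_fin_three]; ring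
  have hNval : Matrix.det (Matrix.of fun i j : Fin 3 =>
      (![x, -x, y] : Fin 3 → F) i ^ ((![2 * A + 1, B + B, C + C] : Fin 3 → ℕ) j + (2 - (j : ℕ))))
      = 2 * x ^ (C + C) * (x ^ (B + B + 1) * y ^ (2 * A + 3) - x ^ (2 * A + 3) * y ^ (B + B + 1)) := by
    simp [Matrix.det_fin_three, e1, e2, e3]; ring
  have hD2val : Matrix.det (Matrix.of fun i j : Fin 2 =>
      (![x ^ 2, y ^ 2] : Fin 2 → F) i ^ (1 - (j : ℕ))) = x ^ 2 - y ^ 2 := by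
    simp [Matrix.det_fin_two]
  have hN2val : Matrix.det (Matrix.of fun i j : Fin 2 =>
      (![x ^ 2, y ^ 2] : Fin 2 → F) i ^ ((![A, B] : Fin 2 → ℕ) j + (1 - (j : ℕ))))
      = x ^ (2 * A + 2) * y ^ (B + B) - x ^ (B + B) * y ^ (2 * A + 2) := by
    simp [Matrix.det_fin_two]; ring
  rw [schur3, schur2, hd1, hd2, hd3, hNval, hDval, hN2val, hD2val]
  rw [show y * ((x ^ (2 * A + 2) * y ^ (B + B) - x ^ (B + B) * y ^ (2 * A + 2)) / (x ^ 2 - y ^ 2)) *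
      (x ^ 2) ^ C =
      y * (x ^ (2 * A + 2) * y ^ (B + B) - x ^ (B + B) * y ^ (2 * A + 2)) * (x ^ 2) ^ C /
      (x ^ 2 - y ^ 2) from by ring, div_eq_div_iff hD hA2]
  ring
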